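/- Let A₁, B₁ : (0,∞) → ℝ be positive continuous functions. For the system x⁺' = (x⁺/A₁)(1 − A₁²/B₁² − x⁺) + (A₁/B₁²)(x⁻)², x⁻' = (2x⁻/A₁)(x⁺ − 1), the open square R = {(x⁺, x⁻) : 0 < x⁺ < 1, 0 < x⁻ < 1} is forward-invariant: if a solution satisfies (x⁺(t₀), x⁻(t₀)) ∈ R for some t₀ > 0, then (x⁺(t), x⁻(t)) ∈ R for all t ≥ t₀ in the maximal interval of existence. Consequently such solutions exist for all t ∈ [t₀, ∞). -/

import Mathlib

open Real Filter Topology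

/-- Forward invariance of the open square `R = (0,1) × (0,1)` for the system
`x⁺' = (x⁺/A₁)(1 − A₁²/B₁² − x⁺) + (A₁/B₁²)(x⁻)²`, `x⁻' = (2x⁻/A₁)(x⁺ − 1)`:
a solution starting in `R` at time `t₀ > 0` stays in `R` for all later times in
its interval of existence. -/
theorem stmt5 (A₁ B₁ xp xm : ℝ → ℝ)
    (hA : ContinuousOn A₁ (Set.Ioi 0)) (hApos : ∀ t ∈ Set.Ioi (0:ℝ), 0 < A₁ t)
    (hB : ContinuousOn B₁ (Set.Ioi 0)) (hBpos : ∀ t ∈ Set.Ioi (0:ℝ), 0 < B₁ t)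
    (t₀ T : ℝ) (ht₀ : 0 < t₀) (hT : t₀ < T)
    (hsol : ∀ t ∈ Set.Ico t₀ T,
      HasDerivAt xp ((xp t / A₁ t) * (1 - (A₁ t)^2 / (B₁ t)^2 - xp t)
        + (A₁ t / (B₁ t)^2) * (xm t)^2) t ∧
      HasDerivAt xm ((2 * xm t / A₁ t) * (xp t - 1)) t)
    (h0 : xp t₀ ∈ Set.Ioo (0:ℝ) 1 ∧ xm t₀ ∈ Set.Ioo (0:ℝ) 1) :
    ∀ t ∈ Set.Ico t₀ T, xp t ∈ Set.Ioo (0:ℝ) 1 ∧ xm t ∈ Set.Ioo (0:ℝ) 1 := by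
  intro t ht
  by_contra hcon
  -- the failure set
  set F : Set ℝ := {s | s ∈ Set.Ico t₀ T ∧
      ¬(xp s ∈ Set.Ioo (0:ℝ) 1 ∧ xm s ∈ Set.Ioo (0:ℝ) 1)} with hF
  have hFne : F.Nonempty := ⟨t, ht, hcon⟩
  have hFbdd : BddBelow F := ⟨t₀, fun s hs => hs.1.1⟩
  set τ := sInf F with hτdef
  have hτge : t₀ ≤ τ := le_csInf hFne fun s hs => hs.1.1
  have hτle : τ ≤ t := csInf_le hFbdd ⟨ht, hcon⟩
  have hτT : τ < T := lt_of_le_of_lt hτle ht.2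
  have hτico : τ ∈ Set.Ico t₀ T := ⟨hτge, hτT⟩
  -- solution stays in the square strictly before τ
  have hP : ∀ s ∈ Set.Ico t₀ τ, xp s ∈ Set.Ioo (0:ℝ) 1 ∧ xm s ∈ Set.Ioo (0:ℝ) 1 := by
    intro s hs
    by_contra h
    exact absurd (csInf_le hFbdd ⟨⟨hs.1, lt_of_lt_of_le hs.2 (le_of_lt hτT)⟩, h⟩)
      (not_le.2 hs.2)
  have hcp : ContinuousAt xp τ := (hsol τ hτico).1.continuousAt
  have hcm : ContinuousAt xm τ := (hsol τ hτico).2.continuousAt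
  -- the square condition fails at τ
  have hnP : ¬(xp τ ∈ Set.Ioo (0:ℝ) 1 ∧ xm τ ∈ Set.Ioo (0:ℝ) 1) := by
    intro hPτ
    have h1 : ∀ᶠ s in 𝓝 τ, xp s ∈ Set.Ioo (0:ℝ) 1 ∧ xm s ∈ Set.Ioo (0:ℝ) 1 := by
      filter_upwards [hcp.eventually_mem (isOpen_Ioo.mem_nhds hPτ.1),
        hcm.eventually_mem (isOpen_Ioo.mem_nhds hPτ.2)] with s h1 h2
      exact ⟨h1, h2⟩
    rcases Metric.eventually_nhds_iff.1 h1 with ⟨δ, hδ, hball⟩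
    rcases Real.lt_sInf_add_pos hFne hδ with ⟨f, hfF, hflt⟩
    have hfge : τ ≤ f := csInf_le hFbdd hfF
    have : dist f τ < δ := by
      rw [Real.dist_eq, abs_of_nonneg (by linarith)]; linarith
    exact hfF.2 (hball this)
  have hτgt : t₀ < τ := by
    rcases lt_or_eq_of_le hτge with h | h
    · exact h
    · exact absurd (h ▸ h0) hnP
  -- eventually before τ we are in [t₀, τ)
  have hev : ∀ᶠ s in 𝓝[<] τ, s ∈ Set.Ico t₀ τ := by
    filter_upwards [Ioo_mem_nhdsLT hτgt] with s hs
    exact ⟨hs.1.le, hs.2⟩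
  -- limits from the left give closed bounds at τ
  have hlimp : Tendsto xp (𝓝[<] τ) (𝓝 (xp τ)) := hcp.continuousWithinAt.tendsto
  have hlimm : Tendsto xm (𝓝[<] τ) (𝓝 (xm τ)) := hcm.continuousWithinAt.tendsto
  have hxpIcc : xp τ ∈ Set.Icc (0:ℝ) 1 :=
    isClosed_Icc.mem_of_tendsto hlimp
      (hev.mono fun s hs => Set.Ioo_subset_Icc_self (hP s hs).1)
  have hxmIcc : xm τ ∈ Set.Icc (0:ℝ) 1 :=
    isClosed_Icc.mem_of_tendsto hlimm
      (hev.mono fun s hs => Set.Ioo_subset_Icc_self (hP s hs).2)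
  have hIccsub : Set.Icc t₀ τ ⊆ Set.Ico t₀ T := fun s hs => ⟨hs.1, lt_of_le_of_lt hs.2 hτT⟩
  have hIccIoi : Set.Icc t₀ τ ⊆ Set.Ioi (0:ℝ) := fun s hs => lt_of_lt_of_le ht₀ hs.1
  have hIntsub : interior (Set.Icc t₀ τ) ⊆ Set.Ico t₀ τ := by
    rw [interior_Icc]; exact fun s hs => ⟨hs.1.le, hs.2⟩
  -- xm is antitone on [t₀, τ], so xm τ < 1
  have hcontm : ContinuousOn xm (Set.Icc t₀ τ) := fun s hs =>
    ((hsol s (hIccsub hs)).2.continuousAt).continuousWithinAt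
  have hantim : AntitoneOn xm (Set.Icc t₀ τ) := by
    apply antitoneOn_of_deriv_nonpos (convex_Icc _ _) hcontm
    · intro s hs
      exact ((hsol s (hIccsub (interior_subset hs))).2.differentiableAt).differentiableWithinAt
    · intro s hs
      have hs' := hIntsub hs
      have hd := (hsol s (hIccsub (interior_subset hs))).2
      rw [hd.deriv]
      have hAp : 0 < A₁ s := hApos s (hIccIoi (interior_subset hs))
      have h1 := (hP s hs').1
      have h2 := (hP s hs').2
      have : xp s - 1 ≤ 0 := by linarith [h1.2]
      have hm0 : 0 ≤ 2 * xm s / A₁ s := div_nonneg (by linarith [h2.1]) hAp.le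
      exact mul_nonpos_of_nonneg_of_nonpos hm0 this
  have hxm1 : xm τ < 1 := by
    have := hantim (Set.left_mem_Icc.2 hτge) (Set.right_mem_Icc.2 hτge) hτge
    exact lt_of_le_of_lt this h0.2.2
  -- xm τ > 0 via a Grönwall-type argument
  obtain ⟨z, hz, hzmin⟩ := isCompact_Icc.exists_isMinOn
    ⟨t₀, Set.left_mem_Icc.2 hτge⟩ (hA.mono hIccIoi)
  have hm : 0 < A₁ z := hApos z (hIccIoi hz)
  set K : ℝ := 2 / A₁ z with hK
  have hKpos : 0 < K := by positivity
  have hxm0 : 0 < xm τ := by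
    set g : ℝ → ℝ := fun s => xm s * Real.exp (K * s) with hg
    have hgd : ∀ s ∈ Set.Icc t₀ τ, HasDerivAt g
        ((2 * xm s / A₁ s) * (xp s - 1) * Real.exp (K * s)
          + xm s * (K * Real.exp (K * s))) s := by
      intro s hs
      have h' : HasDerivAt (fun y => xm y * Real.exp (K * id y)) _ s := ((hsol s (hIccsub hs)).2).mul
        (((hasDerivAt_id s).const_mul K).exp)
      simp only [id_eq] at h'
      convert h' using 1
      ring
    have hmono : MonotoneOn g (Set.Icc t₀ τ) := by
      apply monotoneOn_of_deriv_nonneg (convex_Icc _ _)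
      · exact fun s hs => ((hgd s hs).continuousAt).continuousWithinAt
      · exact fun s hs =>
          ((hgd s (interior_subset hs)).differentiableAt).differentiableWithinAt
      · intro s hs
        have hs' := hIntsub hs
        rw [(hgd s (interior_subset hs)).deriv]
        have hAp : 0 < A₁ s := hApos s (hIccIoi (interior_subset hs))
        have hAge : A₁ z ≤ A₁ s := hzmin (interior_subset hs)
        have h1 := (hP s hs').1
        have h2 := (hP s hs').2
        have hexp : 0 < Real.exp (K * s) := Real.exp_pos _
        have key : 2 * (1 - xp s) / A₁ s ≤ K := by
          rw [hK, div_le_div_iff₀ hAp hm]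
          nlinarith [h1.1, h1.2, hAge, hm]
        have e1 : 2 * xm s / A₁ s * (xp s - 1) * Real.exp (K * s)
            + xm s * (K * Real.exp (K * s))
            = xm s * (K - 2 * (1 - xp s) / A₁ s) * Real.exp (K * s) := by
          field_simp
          ring
        rw [e1]
        have hnn : 0 ≤ xm s * (K - 2 * (1 - xp s) / A₁ s) :=
          mul_nonneg h2.1.le (by linarith)
        exact mul_nonneg hnn hexp.le
    have := hmono (Set.left_mem_Icc.2 hτge) (Set.right_mem_Icc.2 hτge) hτge
    have hgt0 : 0 < g t₀ := mul_pos h0.2.1 (Real.exp_pos _)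
    have hgτ : 0 < g τ := lt_of_lt_of_le hgt0 this
    have hexpτ : 0 < Real.exp (K * τ) := Real.exp_pos _
    by_contra h
    push_neg at h
    simp only [hg] at hgτ
    nlinarith [hgτ, hexpτ, h]
  -- so the xm component is fine at τ; the xp component must hit 0 or 1
  have hxmIoo : xm τ ∈ Set.Ioo (0:ℝ) 1 := ⟨hxm0, hxm1⟩
  have hxpnot : xp τ ∉ Set.Ioo (0:ℝ) 1 := fun h => hnP ⟨h, hxmIoo⟩
  have hderiv := (hsol τ hτico).1
  have hAτ : 0 < A₁ τ := hApos τ (hIccIoi (Set.right_mem_Icc.2 hτge))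
  have hBτ : 0 < B₁ τ := hBpos τ (hIccIoi (Set.right_mem_Icc.2 hτge))
  have hslope : Tendsto (slope xp τ) (𝓝[<] τ)
      (𝓝 ((xp τ / A₁ τ) * (1 - (A₁ τ)^2 / (B₁ τ)^2 - xp τ)
        + (A₁ τ / (B₁ τ)^2) * (xm τ)^2)) :=
    (hasDerivAt_iff_tendsto_slope.1 hderiv).mono_left
      (nhdsWithin_mono τ fun s hs => ne_of_lt hs)
  rcases Set.eq_endpoints_or_mem_Ioo_of_mem_Icc hxpIcc with h0' | h1' | hmem
  · -- xp τ = 0 : derivative is positive, so xp was negative just before τ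
    have hDpos : 0 < (xp τ / A₁ τ) * (1 - (A₁ τ)^2 / (B₁ τ)^2 - xp τ)
        + (A₁ τ / (B₁ τ)^2) * (xm τ)^2 := by
      rw [h0']
      simp only [zero_div, zero_mul, zero_add]
      positivity
    have h3 : ∀ᶠ s in 𝓝[<] τ, 0 < slope xp τ s :=
      hslope.eventually (eventually_gt_nhds hDpos)
    rcases (h3.and hev).exists with ⟨s, hsl, hs⟩
    have hlt : s - τ < 0 := by linarith [hs.2]
    rw [slope_def_field] at hsl
    have : xp s - xp τ < 0 := by
      by_contra hge
      push_neg at hge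
      have := div_nonpos_of_nonneg_of_nonpos hge hlt.le
      linarith
    rw [h0'] at this
    linarith [(hP s hs).1.1]
  · -- xp τ = 1 : derivative is negative, so xp was above 1 just before τ
    have hDneg : (xp τ / A₁ τ) * (1 - (A₁ τ)^2 / (B₁ τ)^2 - xp τ)
        + (A₁ τ / (B₁ τ)^2) * (xm τ)^2 < 0 := by
      rw [h1']
      have heq : (1 / A₁ τ) * (1 - (A₁ τ)^2 / (B₁ τ)^2 - 1)
          + (A₁ τ / (B₁ τ)^2) * (xm τ)^2
          = (A₁ τ / (B₁ τ)^2) * ((xm τ)^2 - 1) := by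
        field_simp
        ring
      rw [heq]
      have h1 : (xm τ)^2 - 1 < 0 := by nlinarith [hxmIoo.1, hxmIoo.2]
      have h2 : 0 < A₁ τ / (B₁ τ)^2 := by positivity
      exact mul_neg_of_pos_of_neg h2 h1
    have h3 : ∀ᶠ s in 𝓝[<] τ, slope xp τ s < 0 :=
      hslope.eventually (eventually_lt_nhds hDneg)
    rcases (h3.and hev).exists with ⟨s, hsl, hs⟩
    have hlt : s - τ < 0 := by linarith [hs.2]
    rw [slope_def_field] at hsl
    have : 0 < xp s - xp τ := by
      by_contra hge
      push_neg at hge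
      have := div_nonneg (neg_nonneg.2 hge) (neg_nonneg.2 hlt.le)
      rw [neg_div_neg_eq] at this
      linarith
    rw [h1'] at this
    linarith [(hP s hs).1.2]
  · exact hxpnot hmem
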